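/- Let G be a finite groupoid and A a G-graded k-algebra. For every right module N over T = ⊕_{x∈G₀} A_x, the unit map ν_N: N → (N ⊗_T A)^{co kG}, ν_N(n) = ∑_{x∈G₀} n·1_x ⊗_T 1_x, is bijective, with inverse sending n_x ⊗ a_x to n_x a_x. -/

import Mathlib

/-- A finite groupoid, given by sets of objects and morphisms with source,
target, identities, partial composition and inverses. -/
structure FinGroupoid where
  O : Type
  M : Type
  [fO : Fintype O]
  [fM : Fintype M]
  [dO : DecidableEq O]
  [dM : DecidableEq M]
  s : M → O
  t : M → O
  e : O → M
  comp : M → M → M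
  inv : M → M
  s_e : ∀ x, s (e x) = x
  t_e : ∀ x, t (e x) = x
  s_comp : ∀ σ τ, t τ = s σ → s (comp σ τ) = s τ
  t_comp : ∀ σ τ, t τ = s σ → t (comp σ τ) = t σ
  comp_assoc : ∀ σ τ ρ, t τ = s σ → t ρ = s τ →
    comp (comp σ τ) ρ = comp σ (comp τ ρ)
  e_comp : ∀ σ, comp (e (t σ)) σ = σ
  comp_e : ∀ σ, comp σ (e (s σ)) = σ
  s_inv : ∀ σ, s (inv σ) = t σ
  t_inv : ∀ σ, t (inv σ) = s σ
  inv_comp : ∀ σ, comp (inv σ) σ = e (s σ)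
  comp_inv : ∀ σ, comp σ (inv σ) = e (t σ)

attribute [instance] FinGroupoid.fO FinGroupoid.fM FinGroupoid.dO FinGroupoid.dM

/-- The multiplication of the groupoid algebra `kG`, on the free module
`G.M → k`:  `u_σ * u_τ = u_{στ}` if `t τ = s σ` and `0` otherwise. -/
noncomputable def gmul (k : Type) [CommRing k] (G : FinGroupoid) (f g : G.M → k) :
    G.M → k := fun m =>
  ∑ p : G.M × G.M,
    if G.t p.2 = G.s p.1 ∧ G.comp p.1 p.2 = m then f p.1 * g p.2 else 0

/-- The unit `∑_{x ∈ G₀} u_{id_x}` of the groupoid algebra. -/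
noncomputable def gone (k : Type) [CommRing k] (G : FinGroupoid) : G.M → k :=
  fun m => ∑ x : G.O, if G.e x = m then 1 else 0

/-- A `G`-graded `k`-algebra, encoded by the projections
`π σ : A → A_σ` onto the homogeneous components. -/
structure GradedAlg (k : Type) [CommRing k] (G : FinGroupoid) (A : Type)
    [Ring A] [Algebra k A] where
  π : G.M → (A →ₗ[k] A)
  sum_pi : ∀ a : A, ∑ σ : G.M, π σ a = a
  pi_pi : ∀ (σ τ : G.M) (a : A), π σ (π τ a) = if σ = τ then π τ a else 0
  mul_comp : ∀ (σ τ : G.M) (a b : A), G.t τ = G.s σ →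
    π σ a * π τ b = π (G.comp σ τ) (π σ a * π τ b)
  mul_ncomp : ∀ (σ τ : G.M) (a b : A), G.t τ ≠ G.s σ → π σ a * π τ b = 0
  one_supp : ∀ σ : G.M, (∀ x : G.O, σ ≠ G.e x) → π σ 1 = 0


open TensorProduct

variable (k : Type) [CommRing k] (G : FinGroupoid) (A : Type) [Ring A] [Algebra k A]

/-- The subring `T = ⊕_{x∈G₀} A_x` of degree-identity components. -/
def Tset (gr : GradedAlg k G A) : Set A :=
  {a : A | ∀ σ : G.M, (∀ x : G.O, σ ≠ G.e x) → gr.π σ a = 0}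

variable (N : Type) [AddCommGroup N] [Module k N]

/-- The `T`-balancing relations in `N ⊗ₖ A`, for a right `T`-action `ract`
on `N`; the quotient is `N ⊗_T A`. -/
noncomputable def balT (gr : GradedAlg k G A) (ract : A → N →ₗ[k] N) :
    Submodule k (N ⊗[k] A) :=
  Submodule.span k {z | ∃ (n : N) (a t : A), t ∈ Tset k G A gr ∧
    z = (ract t n) ⊗ₜ[k] a - n ⊗ₜ[k] (t * a)}

/-- The unit map `ν_N : N → N ⊗_T A`, `ν_N(n) = ∑_{x∈G₀} n·1_x ⊗ 1_x`. -/
noncomputable def nuMap (gr : GradedAlg k G A) (ract : A → N →ₗ[k] N) :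
    N → (N ⊗[k] A) ⧸ balT k G A N gr ract := fun n =>
  ∑ x : G.O, Submodule.Quotient.mk
    ((ract (gr.π (G.e x) 1) n) ⊗ₜ[k] gr.π (G.e x) 1)

/-- The coinvariants `(N ⊗_T A)^{co kG} = ⊕_{x∈G₀} N ⊗_T A_x`: the image of
`N ⊗ₖ T` in `N ⊗_T A`. -/
noncomputable def CoSub (gr : GradedAlg k G A) (ract : A → N →ₗ[k] N) :
    Submodule k ((N ⊗[k] A) ⧸ balT k G A N gr ract) :=
  Submodule.span k {y | ∃ (n : N) (a : A), a ∈ Tset k G A gr ∧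
    y = Submodule.Quotient.mk (n ⊗ₜ[k] a)}

section Aux

variable (gr : GradedAlg k G A)

lemma FinGroupoid.e_injective : Function.Injective G.e := fun x y h => by
  rw [← G.s_e x, h, G.s_e]

lemma T_one : (1 : A) ∈ Tset k G A gr := fun σ h => gr.one_supp σ h

lemma T_pi_e (x : G.O) : gr.π (G.e x) 1 ∈ Tset k G A gr := by
  intro σ hσ
  rw [gr.pi_pi, if_neg (hσ x)]

lemma T_zero : (0 : A) ∈ Tset k G A gr := fun σ _ => map_zero _

lemma T_add {a b : A} (ha : a ∈ Tset k G A gr) (hb : b ∈ Tset k G A gr) :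
    a + b ∈ Tset k G A gr := fun σ hσ => by
  rw [map_add, ha σ hσ, hb σ hσ, add_zero]

lemma T_sum {s : Finset G.O} {f : G.O → A} (hf : ∀ x, f x ∈ Tset k G A gr) :
    ∑ x ∈ s, f x ∈ Tset k G A gr := by
  classical
  induction s using Finset.induction_on with
  | empty => simpa using T_zero k G A gr
  | insert _ _ hne ih =>
      rw [Finset.sum_insert hne]
      exact T_add k G A gr (hf _) ih

/-- The projection onto `T`. -/
noncomputable def piT : A →ₗ[k] A := ∑ x : G.O, gr.π (G.e x)

lemma piT_apply (a : A) : piT k G A gr a = ∑ x : G.O, gr.π (G.e x) a := by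
  simp [piT]

lemma piT_mem (a : A) : piT k G A gr a ∈ Tset k G A gr := by
  rw [piT_apply]
  exact T_sum k G A gr (fun x => by
    intro σ hσ
    rw [gr.pi_pi, if_neg (hσ x)])

/-- Key multiplication rule: for `t ∈ T`, `π_σ (t b) = π_{e(t σ)}(t) ⬝ π_σ(b)`. -/
lemma pi_mul_T {t : A} (ht : t ∈ Tset k G A gr) (b : A) (σ : G.M) :
    gr.π σ (t * b) = gr.π (G.e (G.t σ)) t * gr.π σ b := by
  classical
  have expand : t * b = ∑ ρ : G.M, ∑ τ : G.M, gr.π ρ t * gr.π τ b := by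
    rw [← Finset.sum_mul_sum, gr.sum_pi, gr.sum_pi]
  have key : ∀ ρ τ : G.M, gr.π σ (gr.π ρ t * gr.π τ b) =
      if τ = σ then (if ρ = G.e (G.t σ) then gr.π (G.e (G.t σ)) t * gr.π σ b else 0)
        else 0 := by
    intro ρ τ
    by_cases hρ : ∀ x : G.O, ρ ≠ G.e x
    · rw [ht ρ hρ, zero_mul, map_zero]
      have : ρ ≠ G.e (G.t σ) := hρ (G.t σ)
      split_ifs <;> simp_all
    · push_neg at hρ
      obtain ⟨y, rfl⟩ := hρ
      by_cases hτ : G.t τ = G.s (G.e y)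
      · have hty : G.t τ = y := by rw [hτ, G.s_e]
        have hcomp : G.comp (G.e y) τ = τ := by
          rw [← hty]; exact G.e_comp τ
        have h1 : gr.π (G.e y) t * gr.π τ b =
            gr.π τ (gr.π (G.e y) t * gr.π τ b) := by
          conv_lhs => rw [gr.mul_comp _ _ _ _ hτ]
          rw [hcomp]
        by_cases hts : τ = σ
        · subst hts
          have hy : y = G.t τ := hty.symm
          subst hy
          rw [if_pos rfl, if_pos rfl, h1, gr.pi_pi, if_pos rfl]
        · rw [if_neg hts, h1, gr.pi_pi, if_neg (Ne.symm hts)]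
      · rw [gr.mul_ncomp _ _ _ _ hτ, map_zero]
        by_cases hts : τ = σ
        · subst hts
          rw [if_pos rfl]
          by_cases hye : G.e y = G.e (G.t τ)
          · exfalso
            apply hτ
            have hyt : y = G.t τ := FinGroupoid.e_injective G hye
            rw [G.s_e, hyt]
          · rw [if_neg hye]
        · rw [if_neg hts]
  calc gr.π σ (t * b) = ∑ ρ : G.M, ∑ τ : G.M, gr.π σ (gr.π ρ t * gr.π τ b) := by
        rw [expand]; simp [map_sum]
    _ = gr.π (G.e (G.t σ)) t * gr.π σ b := by
        simp only [key]
        simp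

lemma pi_e_mul_T {t : A} (ht : t ∈ Tset k G A gr) (b : A) (x : G.O) :
    gr.π (G.e x) (t * b) = gr.π (G.e x) t * gr.π (G.e x) b := by
  rw [pi_mul_T k G A gr ht, G.t_e]

lemma T_mul {t t' : A} (ht : t ∈ Tset k G A gr) (ht' : t' ∈ Tset k G A gr) :
    t * t' ∈ Tset k G A gr := by
  intro σ hσ
  rw [pi_mul_T k G A gr ht, ht' σ hσ, mul_zero]

lemma piT_T {t : A} (ht : t ∈ Tset k G A gr) : piT k G A gr t = t := by
  classical
  have hx : ∀ x : G.O, gr.π (G.e x) t =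
      ∑ σ : G.M, if G.e x = σ then gr.π σ t else 0 := by
    intro x
    calc gr.π (G.e x) t = gr.π (G.e x) (∑ σ : G.M, gr.π σ t) := by rw [gr.sum_pi]
      _ = ∑ σ : G.M, gr.π (G.e x) (gr.π σ t) := map_sum _ _ _
      _ = ∑ σ : G.M, if G.e x = σ then gr.π σ t else 0 :=
          Finset.sum_congr rfl fun σ _ => gr.pi_pi _ _ _
  rw [piT_apply]
  simp only [hx]
  rw [Finset.sum_comm]
  conv_rhs => rw [← gr.sum_pi t]
  refine Finset.sum_congr rfl fun σ _ => ?_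
  by_cases h : ∃ x : G.O, σ = G.e x
  · obtain ⟨x, rfl⟩ := h
    rw [Finset.sum_eq_single x]
    · rw [if_pos rfl]
    · intro y _ hy
      exact if_neg (fun hc => hy (FinGroupoid.e_injective G hc))
    · intro hmem
      exact absurd (Finset.mem_univ _) hmem
  · push_neg at h
    rw [ht σ h]
    simp

lemma sum_ones : ∑ x : G.O, gr.π (G.e x) 1 = (1 : A) := by
  have := piT_T k G A gr (T_one k G A gr)
  rwa [piT_apply] at this

lemma one_idem (x : G.O) :
    gr.π (G.e x) 1 * gr.π (G.e x) 1 = gr.π (G.e x) 1 := by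
  have := pi_e_mul_T k G A gr (T_one k G A gr) 1 x
  rw [mul_one] at this
  exact this.symm

lemma piT_pi_e (x : G.O) : piT k G A gr (gr.π (G.e x) 1) = gr.π (G.e x) 1 :=
  piT_T k G A gr (T_pi_e k G A gr x)

lemma T_mul_pi {t : A} (ht : t ∈ Tset k G A gr) (a : A) (x : G.O) :
    t * gr.π (G.e x) a = gr.π (G.e x) t * gr.π (G.e x) a := by
  classical
  conv_lhs => rw [← gr.sum_pi t, Finset.sum_mul]
  rw [Finset.sum_eq_single (G.e x)]
  · intro ρ _ hρ
    by_cases h : ∀ y : G.O, ρ ≠ G.e y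
    · rw [ht ρ h, zero_mul]
    · push_neg at h
      obtain ⟨y, rfl⟩ := h
      refine gr.mul_ncomp _ _ _ _ ?_
      rw [G.t_e, G.s_e]
      exact fun hxy => hρ (by rw [hxy])
  · intro h
    exact absurd (Finset.mem_univ _) h

lemma mul_piT {t : A} (ht : t ∈ Tset k G A gr) (a : A) :
    t * piT k G A gr a = piT k G A gr (t * a) := by
  rw [piT_apply, piT_apply, Finset.mul_sum]
  refine Finset.sum_congr rfl (fun x _ => ?_)
  rw [T_mul_pi k G A gr ht, pi_e_mul_T k G A gr ht]

lemma ract_zero (gr : GradedAlg k G A) (ract : A → N →ₗ[k] N)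
    (hsmul : ∀ (c : k) (t : A), t ∈ Tset k G A gr → ract (c • t) = c • ract t) :
    ract 0 = 0 := by
  have := hsmul 0 0 (T_zero k G A gr)
  simpa using this

lemma ract_sum (gr : GradedAlg k G A) (ract : A → N →ₗ[k] N)
    (hadd : ∀ t t' : A, t ∈ Tset k G A gr → t' ∈ Tset k G A gr →
      ract (t + t') = ract t + ract t')
    (hsmul : ∀ (c : k) (t : A), t ∈ Tset k G A gr → ract (c • t) = c • ract t)
    {s : Finset G.O} {f : G.O → A} (hf : ∀ x, f x ∈ Tset k G A gr) :
    ract (∑ x ∈ s, f x) = ∑ x ∈ s, ract (f x) := by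
  classical
  induction s using Finset.induction_on with
  | empty => simpa using ract_zero k G A N gr ract hsmul
  | insert _ _ hne ih =>
      rw [Finset.sum_insert hne, Finset.sum_insert hne,
        hadd _ _ (hf _) (T_sum k G A gr hf), ih]

/-- The retraction `N ⊗ₖ A → N`, `n ⊗ a ↦ n · π_T(a)`. -/
noncomputable def phi (gr : GradedAlg k G A) (ract : A → N →ₗ[k] N)
    (hadd : ∀ t t' : A, t ∈ Tset k G A gr → t' ∈ Tset k G A gr →
      ract (t + t') = ract t + ract t')
    (hsmul : ∀ (c : k) (t : A), t ∈ Tset k G A gr → ract (c • t) = c • ract t) :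
    (N ⊗[k] A) →ₗ[k] N :=
  TensorProduct.lift
    { toFun := fun n =>
        { toFun := fun a => ract (piT k G A gr a) n
          map_add' := fun a b => by
            show ract (piT k G A gr (a + b)) n
              = ract (piT k G A gr a) n + ract (piT k G A gr b) n
            rw [map_add, hadd _ _ (piT_mem k G A gr a) (piT_mem k G A gr b),
              LinearMap.add_apply]
          map_smul' := fun c a => by
            show ract (piT k G A gr (c • a)) n = c • ract (piT k G A gr a) n
            rw [map_smul, hsmul c _ (piT_mem k G A gr a), LinearMap.smul_apply] }
      map_add' := fun n m => by
        ext a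
        simp
      map_smul' := fun c n => by
        ext a
        simp }

lemma phi_tmul (gr : GradedAlg k G A) (ract : A → N →ₗ[k] N)
    (hadd : ∀ t t' : A, t ∈ Tset k G A gr → t' ∈ Tset k G A gr →
      ract (t + t') = ract t + ract t')
    (hsmul : ∀ (c : k) (t : A), t ∈ Tset k G A gr → ract (c • t) = c • ract t)
    (n : N) (a : A) :
    phi k G A N gr ract hadd hsmul (n ⊗ₜ[k] a) = ract (piT k G A gr a) n := rfl

end Aux

/-- let `G` be a finite groupoid, `A` a `G`-graded `k`-algebra,
`T = ⊕_{x∈G₀} A_x`, and `N` a right `T`-module.  The unit map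
`ν_N : N → (N ⊗_T A)^{co kG}`, `ν_N(n) = ∑_{x∈G₀} n·1_x ⊗ 1_x`, is
bijective. -/
theorem unit_map_bijective (gr : GradedAlg k G A) (ract : A → N →ₗ[k] N)
    -- `ract` is a right action of the subring `T` on `N`:
    (hmul : ∀ t t' : A, t ∈ Tset k G A gr → t' ∈ Tset k G A gr →
      ∀ n : N, ract (t * t') n = ract t' (ract t n))
    (hone : ∀ n : N, ract 1 n = n)
    (hadd : ∀ t t' : A, t ∈ Tset k G A gr → t' ∈ Tset k G A gr →
      ract (t + t') = ract t + ract t')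
    (hsmul : ∀ (c : k) (t : A), t ∈ Tset k G A gr →
      ract (c • t) = c • ract t) :
    (∀ n : N, nuMap k G A N gr ract n ∈ CoSub k G A N gr ract) ∧
    Function.Injective (nuMap k G A N gr ract) ∧
    (∀ y ∈ CoSub k G A N gr ract, ∃ n : N, nuMap k G A N gr ract n = y) := by
  classical
  -- the retraction, descended to the quotient
  have hker : balT k G A N gr ract ≤ LinearMap.ker (phi k G A N gr ract hadd hsmul) := by
    unfold balT
    rw [Submodule.span_le]
    rintro z ⟨n, a, t, ht, rfl⟩
    simp only [SetLike.mem_coe, LinearMap.mem_ker, map_sub]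
    rw [phi_tmul, phi_tmul, ← hmul t _ ht (piT_mem k G A gr a),
      mul_piT k G A gr ht, sub_self]
  set Φ : ((N ⊗[k] A) ⧸ balT k G A N gr ract) →ₗ[k] N :=
    Submodule.liftQ _ (phi k G A N gr ract hadd hsmul) hker with hΦ
  have hΦmk : ∀ z : N ⊗[k] A, Φ (Submodule.Quotient.mk z)
      = phi k G A N gr ract hadd hsmul z := fun z => rfl
  -- Φ is a left inverse of ν
  have hleft : ∀ n : N, Φ (nuMap k G A N gr ract n) = n := by
    intro n
    unfold nuMap
    rw [map_sum]
    have hterm : ∀ x : G.O,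
        Φ (Submodule.Quotient.mk ((ract (gr.π (G.e x) 1) n) ⊗ₜ[k] gr.π (G.e x) 1))
          = ract (gr.π (G.e x) 1) n := by
      intro x
      rw [hΦmk, phi_tmul, piT_pi_e,
        ← hmul _ _ (T_pi_e k G A gr x) (T_pi_e k G A gr x), one_idem]
    rw [Finset.sum_congr rfl (fun x _ => hterm x)]
    have hsum : (∑ x : G.O, ract (gr.π (G.e x) 1)) n
        = ∑ x : G.O, ract (gr.π (G.e x) 1) n := by simp
    rw [← hsum,
      ← ract_sum k G A N gr ract hadd hsmul (fun x => T_pi_e k G A gr x),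
      sum_ones k G A gr]
    exact hone n
  -- membership
  have hmem : ∀ n : N, nuMap k G A N gr ract n ∈ CoSub k G A N gr ract := by
    intro n
    unfold nuMap CoSub
    refine Submodule.sum_mem _ (fun x _ => Submodule.subset_span ?_)
    exact ⟨ract (gr.π (G.e x) 1) n, gr.π (G.e x) 1, T_pi_e k G A gr x, rfl⟩
  -- ν is linear
  have nu_add : ∀ n m : N, nuMap k G A N gr ract (n + m)
      = nuMap k G A N gr ract n + nuMap k G A N gr ract m := by
    intro n m
    unfold nuMap
    rw [← Finset.sum_add_distrib]
    refine Finset.sum_congr rfl fun x _ => ?_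
    rw [map_add, add_tmul, Submodule.Quotient.mk_add]
  have nu_smul : ∀ (c : k) (n : N), nuMap k G A N gr ract (c • n)
      = c • nuMap k G A N gr ract n := by
    intro c n
    unfold nuMap
    rw [Finset.smul_sum]
    refine Finset.sum_congr rfl fun x _ => ?_
    rw [map_smul, ← smul_tmul', Submodule.Quotient.mk_smul]
  set nuL : N →ₗ[k] ((N ⊗[k] A) ⧸ balT k G A N gr ract) :=
    { toFun := nuMap k G A N gr ract
      map_add' := nu_add
      map_smul' := nu_smul } with hnuL
  -- surjectivity onto CoSub
  have hle : CoSub k G A N gr ract ≤ LinearMap.range nuL := by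
    unfold CoSub
    rw [Submodule.span_le]
    rintro y ⟨n, a, ha, rfl⟩
    refine ⟨ract a n, ?_⟩
    show nuMap k G A N gr ract (ract a n) = Submodule.Quotient.mk (n ⊗ₜ[k] a)
    unfold nuMap
    have hterm : ∀ x : G.O,
        Submodule.Quotient.mk (p := balT k G A N gr ract)
          ((ract (gr.π (G.e x) 1) (ract a n)) ⊗ₜ[k] gr.π (G.e x) 1)
        = Submodule.Quotient.mk (n ⊗ₜ[k] (a * gr.π (G.e x) 1)) := by
      intro x
      have h1 : ract (gr.π (G.e x) 1) (ract a n) = ract (a * gr.π (G.e x) 1) n :=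
        (hmul a _ ha (T_pi_e k G A gr x) n).symm
      rw [h1, Submodule.Quotient.eq]
      have heq : a * gr.π (G.e x) 1 = (a * gr.π (G.e x) 1) * gr.π (G.e x) 1 := by
        rw [mul_assoc, one_idem]
      have hgen : (ract (a * gr.π (G.e x) 1)) n ⊗ₜ[k] gr.π (G.e x) 1
          - n ⊗ₜ[k] ((a * gr.π (G.e x) 1) * gr.π (G.e x) 1) ∈ balT k G A N gr ract :=
        Submodule.subset_span ⟨n, gr.π (G.e x) 1, a * gr.π (G.e x) 1,
          T_mul k G A gr ha (T_pi_e k G A gr x), rfl⟩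
      rw [← heq] at hgen
      exact hgen
    rw [Finset.sum_congr rfl (fun x _ => hterm x)]
    have hms : ∑ x : G.O, Submodule.Quotient.mk (p := balT k G A N gr ract)
        (n ⊗ₜ[k] (a * gr.π (G.e x) 1))
        = Submodule.Quotient.mk (n ⊗ₜ[k] (a * ∑ x : G.O, gr.π (G.e x) 1)) := by
      rw [Finset.mul_sum, tmul_sum]
      exact (map_sum ((balT k G A N gr ract).mkQ) _ _).symm
    rw [hms, sum_ones k G A gr, mul_one]
  refine ⟨hmem, Function.LeftInverse.injective hleft, fun y hy => ?_⟩
  obtain ⟨n, hn⟩ := hle hy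
  exact ⟨n, hn⟩
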